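/- Let G be a group and K ≤ G a subgroup equipped with injective homomorphisms φ₀, φ₁ : K → K whose images commute elementwise and intersect trivially. If K contains an element of infinite order, then G contains a subgroup isomorphic to the free abelian group ℤ^n for every n ≥ 1; if K contains an element of finite order k > 2, then G contains a subgroup isomorphic to (ℤ/k)^n for every n ≥ 1. -/

import Mathlib

private lemma phi_aux {G : Type*} [Group G] (K : Subgroup G)
    (φ : Bool → (K →* K)) (hinj : ∀ i, Function.Injective (φ i))
    (hcomm : ∀ x y : K, Commute (φ false x) (φ true y))
    (htriv : ∀ x y : K, φ false x = φ true y → φ false x = 1) :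
    ∀ n : ℕ, ∃ Φ : (Fin n → K) →* K, Function.Injective Φ := by
  intro n
  induction n with
  | zero =>
    refine ⟨1, fun a b _ => funext fun i => i.elim0⟩
  | succ n ih =>
    obtain ⟨Φ, hΦ⟩ := ih
    refine ⟨MonoidHom.mk' (fun f : Fin (n+1) → K => φ false (f 0) * φ true (Φ (fun i => f i.succ))) ?_, ?_⟩
    · intro f g
      have hsplit : Φ (fun i : Fin n => (f * g) i.succ)
          = Φ (fun i : Fin n => f i.succ) * Φ (fun i : Fin n => g i.succ) := by
        show Φ ((fun i : Fin n => f i.succ) * (fun i : Fin n => g i.succ)) = _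
        exact map_mul Φ _ _
      show φ false ((f * g) 0) * φ true (Φ fun i => (f * g) i.succ) = _
      rw [hsplit]
      simp only [Pi.mul_apply, map_mul]
      have hc := (hcomm (g 0) (Φ fun i => f i.succ)).eq
      calc φ false (f 0) * φ false (g 0) * (φ true (Φ fun i => f i.succ) * φ true (Φ fun i => g i.succ))
          = φ false (f 0) * ((φ false (g 0)) * φ true (Φ fun i => f i.succ)) * φ true (Φ fun i => g i.succ) := by group
        _ = φ false (f 0) * (φ true (Φ fun i => f i.succ) * φ false (g 0)) * φ true (Φ fun i => g i.succ) := by rw [hc]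
        _ = φ false (f 0) * φ true (Φ fun i => f i.succ) * (φ false (g 0) * φ true (Φ fun i => g i.succ)) := by group
    · intro f g h
      simp only [MonoidHom.mk'_apply] at h
      have h2 : (φ false (g 0))⁻¹ * φ false (f 0)
          = φ true (Φ fun i => g i.succ) * (φ true (Φ fun i => f i.succ))⁻¹ := by
        calc (φ false (g 0))⁻¹ * φ false (f 0)
            = (φ false (g 0))⁻¹ * (φ false (f 0) * φ true (Φ fun i => f i.succ))
              * (φ true (Φ fun i => f i.succ))⁻¹ := by group
          _ = (φ false (g 0))⁻¹ * (φ false (g 0) * φ true (Φ fun i => g i.succ))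
              * (φ true (Φ fun i => f i.succ))⁻¹ := by rw [h]
          _ = φ true (Φ fun i => g i.succ) * (φ true (Φ fun i => f i.succ))⁻¹ := by group
      have h3 : φ false ((g 0)⁻¹ * f 0)
          = φ true ((Φ fun i => g i.succ) * (Φ fun i => f i.succ)⁻¹) := by
        simp only [map_mul, map_inv]; exact h2
      have h4 := htriv _ _ h3
      have h5 : (g 0)⁻¹ * f 0 = 1 := hinj false (by rw [h4, map_one])
      have h6 : (Φ fun i => g i.succ) * (Φ fun i => f i.succ)⁻¹ = 1 :=
        hinj true (by rw [← h3, h4, map_one])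
      have hf0 : f 0 = g 0 := by
        rw [inv_mul_eq_one] at h5; exact h5.symm
      have hΦeq : (Φ fun i => f i.succ) = (Φ fun i => g i.succ) := by
        rw [mul_inv_eq_one] at h6; exact h6.symm
      have htail := hΦ hΦeq
      funext i
      refine Fin.cases hf0 (fun j => ?_) i
      exact congrFun htail j

private lemma pi_embed {G : Type*} [Group G] (K : Subgroup G) {A : Type*} [AddCommMonoid A]
    (n : ℕ) (Φ : (Fin n → K) →* K) (hΦ : Function.Injective Φ)
    (g : Multiplicative A →* K) (hg : Function.Injective g) :
    ∃ f : Multiplicative (Fin n → A) →* G, Function.Injective f := by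
  let P : (Fin n → Multiplicative A) →* (Fin n → K) :=
    Pi.monoidHom fun i => g.comp (Pi.evalMonoidHom (fun _ => Multiplicative A) i)
  have hP : Function.Injective P := by
    intro a b h
    funext i
    exact hg (congrFun h i)
  refine ⟨K.subtype.comp (Φ.comp (P.comp
    (MulEquiv.piMultiplicative (fun _ : Fin n => A)).toMonoidHom)), ?_⟩
  exact K.subtype_injective.comp (hΦ.comp (hP.comp
    (MulEquiv.piMultiplicative (fun _ : Fin n => A)).injective))

/-- If a subgroup `K ≤ G` admits injective endomorphisms `φ₀, φ₁` with elementwise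
commuting images intersecting trivially, then: an element of `K` of infinite order gives
subgroups of `G` isomorphic to `ℤ^n` for every `n ≥ 1`, and an element of finite order
`k > 2` gives subgroups isomorphic to `(ℤ/k)^n` for every `n ≥ 1`. -/
theorem branch_contains_large_abelian {G : Type*} [Group G] (K : Subgroup G)
    (φ : Bool → (K →* K)) (hinj : ∀ i, Function.Injective (φ i))
    (hcomm : ∀ x y : K, Commute (φ false x) (φ true y))
    (htriv : ∀ x y : K, φ false x = φ true y → φ false x = 1) :
    (∀ d : K, orderOf d = 0 → ∀ n : ℕ, 1 ≤ n →
        ∃ f : Multiplicative (Fin n → ℤ) →* G, Function.Injective f) ∧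
    (∀ d : K, 2 < orderOf d → ∀ n : ℕ, 1 ≤ n →
        ∃ f : Multiplicative (Fin n → ZMod (orderOf d)) →* G, Function.Injective f) := by
  constructor
  · intro d hd n _
    obtain ⟨Φ, hΦ⟩ := phi_aux K φ hinj hcomm htriv n
    refine pi_embed K n Φ hΦ (zpowersHom K d) ?_
    have hzi : Function.Injective (fun m : ℤ => d ^ m) :=
      injective_zpow_iff_not_isOfFinOrder.mpr (orderOf_eq_zero_iff.mp hd)
    intro a b h
    exact Multiplicative.toAdd.injective (hzi h)
  · intro d hd n _
    obtain ⟨Φ, hΦ⟩ := phi_aux K φ hinj hcomm htriv n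
    have hk : orderOf d ≠ 0 := by omega
    haveI : NeZero (orderOf d) := ⟨hk⟩
    let F : ℤ →+ Additive K := AddMonoidHom.mk' (fun m => Additive.ofMul (d ^ m))
      (fun a b => by simp [zpow_add])
    have hFk : F ((orderOf d : ℕ) : ℤ) = 0 := by
      show Additive.ofMul (d ^ ((orderOf d : ℕ) : ℤ)) = 0
      rw [zpow_natCast, pow_orderOf_eq_one]; rfl
    let L : ZMod (orderOf d) →+ Additive K := ZMod.lift (orderOf d) ⟨F, hFk⟩
    have hL : Function.Injective L := by
      rw [ZMod.lift_injective]
      intro m hm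
      have hm1 : d ^ m = 1 := hm
      have : ((orderOf d : ℕ) : ℤ) ∣ m := orderOf_dvd_iff_zpow_eq_one.mpr hm1
      exact (ZMod.intCast_zmod_eq_zero_iff_dvd m (orderOf d)).mpr this
    refine pi_embed K n Φ hΦ (AddMonoidHom.toMultiplicativeLeft L) ?_
    intro a b h
    simp only [AddMonoidHom.coe_toMultiplicativeLeft, Function.comp_apply] at h
    exact Multiplicative.toAdd.injective (hL (Additive.toMul.injective h))
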